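/- Let A be a unital Banach algebra, f holomorphic on an open set U ⊂ ℂ containing the spectra of commuting elements a_0,...,a_n, a_{n+1} ∈ A, and let γ be a contour in U encircling all spectra. Define, for b_1,...,b_n ∈ A, F_{a_0,...,a_n}(b_1,...,b_n) := (1/(2πi)) ∮_γ f(ζ) (ζ-a_0)^{-1} b_1 (ζ-a_1)^{-1} ⋯ b_n (ζ-a_n)^{-1} dζ. Then F_{a_0,...,a_{n-1},a_{n+1}}(b_1,...,b_n) - F_{a_0,...,a_{n-1},a_n}(b_1,...,b_n) = F_{a_0,...,a_n,a_{n+1}}(b_1,...,b_n·(a_{n+1}-a_n)), i.e., the noncommutative divided-difference recursion holds. -/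

import Mathlib

open Metric

variable {A : Type*} [NormedRing A] [NormedAlgebra ℂ A] [CompleteSpace A]

/-- The noncommutative divided difference paired with elements `b₁,…,bₙ`:
`F_{a₀,…,aₙ}(b₁,…,bₙ) = (1/2πi) ∮ f(ζ) (ζ-a₀)⁻¹ b₁ (ζ-a₁)⁻¹ ⋯ bₙ (ζ-aₙ)⁻¹ dζ`,
the contour being the positively oriented circle of center `c` and radius `R`. -/
noncomputable def ncDivDiff (f : ℂ → ℂ) (c : ℂ) (R : ℝ) {n : ℕ}
    (a : Fin (n + 1) → A) (b : Fin n → A) : A :=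
  (2 * Real.pi * Complex.I)⁻¹ •
    ∮ ζ in C(c, R), f ζ •
      ((List.ofFn fun j : Fin n =>
          Ring.inverse (algebraMap ℂ A ζ - a j.castSucc) * b j).prod *
        Ring.inverse (algebraMap ℂ A ζ - a (Fin.last n)))

private lemma ring_inverse_sub_inverse {x y : A} (hx : IsUnit x) (hy : IsUnit y) :
    Ring.inverse y - Ring.inverse x = Ring.inverse x * (x - y) * Ring.inverse y := by
  rw [mul_sub, Ring.inverse_mul_cancel _ hx, sub_mul, one_mul, mul_assoc,
    Ring.mul_inverse_cancel _ hy, mul_one]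

private lemma isUnit_res {c : ℂ} {R : ℝ} {x : A} (hx : spectrum ℂ x ⊆ ball c R)
    {ζ : ℂ} (hζ : ζ ∈ sphere c R) : IsUnit (algebraMap ℂ A ζ - x) := by
  refine spectrum.notMem_iff.mp fun h => ?_
  have := hx h
  rw [mem_ball] at this
  rw [mem_sphere] at hζ
  exact absurd hζ (ne_of_lt this)

private lemma contOn_res {c : ℂ} {R : ℝ} {x : A} (hx : spectrum ℂ x ⊆ ball c R) :
    ContinuousOn (fun ζ : ℂ => Ring.inverse (algebraMap ℂ A ζ - x)) (sphere c R) := by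
  intro ζ hζ
  obtain ⟨u, hu⟩ := isUnit_res hx hζ
  have h1 : ContinuousAt (Ring.inverse : A → A) (algebraMap ℂ A ζ - x) := by
    rw [← hu]; exact NormedRing.inverse_continuousAt u
  have h2 : ContinuousAt (fun ζ : ℂ => algebraMap ℂ A ζ - x) ζ :=
    ((continuous_algebraMap ℂ A).sub continuous_const).continuousAt
  exact (h1.comp (f := fun ζ : ℂ => algebraMap ℂ A ζ - x) h2).continuousWithinAt

private lemma contOn_listProd {m : ℕ} {s : Set ℂ} (g : Fin m → ℂ → A)
    (hg : ∀ j, ContinuousOn (g j) s) :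
    ContinuousOn (fun ζ => (List.ofFn fun j => g j ζ).prod) s := by
  induction m with
  | zero => simpa using continuousOn_const
  | succ m ih =>
    simp only [List.ofFn_succ, List.prod_cons]
    exact (hg 0).mul (ih _ fun j => hg _)

theorem ncDivDiff_recursion (n : ℕ) (U : Set ℂ) (hU : IsOpen U) (f : ℂ → ℂ)
    (hf : DifferentiableOn ℂ f U) (c : ℂ) (R : ℝ) (hR : 0 < R)
    (hUc : closedBall c R ⊆ U)
    (a : Fin (n + 1) → A) (a' : A) (b : Fin n → A)
    (hcomm : ∀ i j, Commute (a i) (a j)) (hcomm' : ∀ i, Commute (a i) a')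
    (hspec : ∀ j, spectrum ℂ (a j) ⊆ ball c R)
    (hspec' : spectrum ℂ a' ⊆ ball c R) :
    ncDivDiff f c R (Function.update a (Fin.last n) a') b -
        ncDivDiff f c R a b =
      ncDivDiff f c R (Fin.snoc a a')
        (Fin.snoc b (a' - a (Fin.last n))) := by
  have hsub : sphere c R ⊆ U := fun ζ hζ => hUc (sphere_subset_closedBall hζ)
  have hfc : ContinuousOn f (sphere c R) := (hf.continuousOn).mono hsub
  set P : ℂ → A := fun ζ =>
    (List.ofFn fun j : Fin n =>
      Ring.inverse (algebraMap ℂ A ζ - a j.castSucc) * b j).prod with hP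
  have hPc : ContinuousOn P (sphere c R) :=
    contOn_listProd _ fun j => (contOn_res (hspec j.castSucc)).mul continuousOn_const
  -- integrands
  set g1 : ℂ → A := fun ζ => f ζ • (P ζ * Ring.inverse (algebraMap ℂ A ζ - a')) with hg1
  set g2 : ℂ → A := fun ζ =>
    f ζ • (P ζ * Ring.inverse (algebraMap ℂ A ζ - a (Fin.last n))) with hg2
  have hg1c : ContinuousOn g1 (sphere c R) := hfc.smul (hPc.mul (contOn_res hspec'))
  have hg2c : ContinuousOn g2 (sphere c R) :=
    hfc.smul (hPc.mul (contOn_res (hspec (Fin.last n))))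
  have hi1 : CircleIntegrable g1 c R := hg1c.circleIntegrable hR.le
  have hi2 : CircleIntegrable g2 c R := hg2c.circleIntegrable hR.le
  -- identify first integrand
  have e1 : ncDivDiff f c R (Function.update a (Fin.last n) a') b =
      (2 * Real.pi * Complex.I)⁻¹ • ∮ ζ in C(c, R), g1 ζ := by
    unfold ncDivDiff
    congr 1
    refine circleIntegral.integral_congr hR.le fun ζ hζ => ?_
    have hupd : ∀ j : Fin n, Function.update a (Fin.last n) a' j.castSucc = a j.castSucc :=
      fun j => Function.update_of_ne (Fin.castSucc_lt_last j).ne _ _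
    simp only [hg1, hP, hupd, Function.update_self]
  have e2 : ncDivDiff f c R a b =
      (2 * Real.pi * Complex.I)⁻¹ • ∮ ζ in C(c, R), g2 ζ := rfl
  -- pointwise identity on the sphere
  have key : Set.EqOn (fun ζ => g1 ζ - g2 ζ)
      (fun ζ => f ζ •
        ((List.ofFn fun j : Fin (n + 1) =>
            Ring.inverse (algebraMap ℂ A ζ - (Fin.snoc a a' : Fin (n+2) → A) j.castSucc) *
              (Fin.snoc b (a' - a (Fin.last n)) : Fin (n+1) → A) j).prod *
          Ring.inverse (algebraMap ℂ A ζ - (Fin.snoc a a' : Fin (n+2) → A) (Fin.last (n+1)))))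
      (sphere c R) := by
    intro ζ hζ
    have hu1 : IsUnit (algebraMap ℂ A ζ - a') := isUnit_res hspec' hζ
    have hu2 : IsUnit (algebraMap ℂ A ζ - a (Fin.last n)) := isUnit_res (hspec _) hζ
    simp only [hg1, hg2, ← smul_sub, ← mul_sub]
    have hres : Ring.inverse (algebraMap ℂ A ζ - a') -
        Ring.inverse (algebraMap ℂ A ζ - a (Fin.last n)) =
        Ring.inverse (algebraMap ℂ A ζ - a (Fin.last n)) * (a' - a (Fin.last n)) *
          Ring.inverse (algebraMap ℂ A ζ - a') := by
      rw [ring_inverse_sub_inverse hu2 hu1]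
      congr 2
      abel
    rw [hres]
    -- expand the snoc product
    have hofn : (List.ofFn fun j : Fin (n + 1) =>
        Ring.inverse (algebraMap ℂ A ζ - (Fin.snoc a a' : Fin (n+2) → A) j.castSucc) *
          (Fin.snoc b (a' - a (Fin.last n)) : Fin (n+1) → A) j) =
        (List.ofFn fun j : Fin n =>
          Ring.inverse (algebraMap ℂ A ζ - a j.castSucc) * b j) ++
        [Ring.inverse (algebraMap ℂ A ζ - a (Fin.last n)) * (a' - a (Fin.last n))] := by
      rw [List.ofFn_succ']
      simp [Fin.snoc_castSucc, Fin.snoc_last, List.concat_eq_append]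
    simp only [hofn, List.prod_append, List.prod_cons, List.prod_nil, mul_one,
      Fin.snoc_last, ← hP, mul_assoc]
    rfl
  calc ncDivDiff f c R (Function.update a (Fin.last n) a') b - ncDivDiff f c R a b
      = (2 * Real.pi * Complex.I)⁻¹ • ((∮ ζ in C(c, R), g1 ζ) - ∮ ζ in C(c, R), g2 ζ) := by
        rw [e1, e2, smul_sub]
    _ = (2 * Real.pi * Complex.I)⁻¹ • ∮ ζ in C(c, R), (g1 ζ - g2 ζ) := by
        rw [circleIntegral.integral_sub hi1 hi2]
    _ = _ := by
        rw [circleIntegral.integral_congr hR.le key]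
        rfl
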